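/- Let R be an integral domain, F a field containing R, and y ∈ F. Then y is integral over R if and only if v(y) ≤ 1 for every valuation v of F (with values in an ordered abelian group with adjoined zero) satisfying v(x) ≤ 1 for all x ∈ R. -/

import Mathlib

universe u

/- An element of a field is integral over a subring `R` if and only if
`v y ≤ 1` for every valuation `v` that is `≤ 1` on `R`. -/
theorem integral_iff_valuation_le_one {F : Type u} [Field F]
    (R : Subring F) (y : F) :
    (∃ p : Polynomial F, p.Monic ∧ (∀ i, p.coeff i ∈ R) ∧ p.eval y = 0) ↔
    ∀ (Γ : Type u) (_ : LinearOrderedCommGroupWithZero Γ) (v : Valuation F Γ),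
      (∀ x ∈ R, v x ≤ 1) → v y ≤ 1 := by
  constructor
  · rintro ⟨p, hm, hc, he⟩ Γ _ v hv
    have hsub : (↑p.coeffs : Set F) ⊆ v.integer := by
      intro x hx
      simp only [Polynomial.coeffs, Finset.coe_image, Set.mem_image] at hx
      obtain ⟨i, _, rfl⟩ := hx
      exact hv _ (hc i)
    have hint : IsIntegral v.integer y := by
      refine ⟨p.toSubring v.integer hsub, (Polynomial.monic_toSubring _ _ _).2 hm, ?_⟩
      rw [Polynomial.eval₂_eq_eval_map,
        show (algebraMap v.integer F) = Subring.subtype v.integer from rfl,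
        Polynomial.map_toSubring, he]
    exact Valuation.Integers.mem_of_integral (Valuation.integer.integers v) hint
  · intro H
    by_contra hny
    have hy0 : y ≠ 0 := by
      rintro rfl
      exact hny ⟨Polynomial.X, Polynomial.monic_X, fun i => by
        rw [Polynomial.coeff_X]; split_ifs
        · exact R.one_mem
        · exact R.zero_mem, by simp⟩
    set z := y⁻¹ with hz
    let S : Subring F := (Algebra.adjoin R {z}).toSubring
    have hzS : z ∈ S := Algebra.self_mem_adjoin_singleton _ _
    have hznu : (⟨z, hzS⟩ : S) ∈ nonunits S := by
      intro hu
      obtain ⟨w, hw⟩ := isUnit_iff_exists_inv.mp hu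
      have hwy : (w : F) = y := by
        have := congr_arg (Subtype.val) hw
        simp only [Subring.coe_mul, OneMemClass.coe_one] at this
        field_simp [hz] at this
        rw [hz, inv_mul_eq_one₀ hy0] at this
        exact this.symm
      have hyS : y ∈ Algebra.adjoin R {z} := hwy ▸ w.2
      rw [Algebra.adjoin_singleton_eq_range_aeval] at hyS
      obtain ⟨q, hq⟩ := hyS
      have hq2 : Polynomial.aeval z q = y := hq
      apply hny
      set n := q.natDegree with hn
      refine ⟨Polynomial.X ^ (n + 1) -
        ∑ i ∈ Finset.range (n + 1), Polynomial.C ((q.coeff i : F)) * Polynomial.X ^ (n - i),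
        ?_, ?_, ?_⟩
      · have hdeg : (∑ i ∈ Finset.range (n + 1),
            Polynomial.C ((q.coeff i : F)) * Polynomial.X ^ (n - i)).degree ≤ (n : WithBot ℕ) := by
          apply (Polynomial.degree_sum_le _ _).trans
          rw [Finset.sup_le_iff]
          intro i hi
          exact (Polynomial.degree_C_mul_X_pow_le _ _).trans
            (by exact_mod_cast Nat.cast_le.mpr (Nat.sub_le n i))
        exact Polynomial.monic_X_pow_sub
          (hdeg.trans_lt (by exact_mod_cast Nat.lt_succ_self n))
      · intro j
        rw [Polynomial.coeff_sub, Polynomial.coeff_X_pow, Polynomial.finset_sum_coeff]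
        refine sub_mem ?_ (Subring.sum_mem R ?_)
        · split_ifs
          · exact R.one_mem
          · exact R.zero_mem
        · intro i hi
          rw [Polynomial.coeff_C_mul, Polynomial.coeff_X_pow]
          split_ifs <;> simp [R.zero_mem, (q.coeff i).2]
      · have hyz : ∀ i ≤ n, z ^ i * y ^ n = y ^ (n - i) := by
          intro i hi
          rw [hz, inv_pow, inv_mul_eq_iff_eq_mul₀ (pow_ne_zero _ hy0), ← pow_add,
            Nat.add_sub_cancel' hi]
        have hq' : y = ∑ i ∈ Finset.range (n + 1), (q.coeff i : F) * z ^ i := by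
          rw [← hq2, Polynomial.aeval_eq_sum_range]
          exact Finset.sum_congr rfl fun i _ => by rw [Algebra.smul_def]; rfl
        have key : y ^ (n + 1) = ∑ i ∈ Finset.range (n + 1), (q.coeff i : F) * y ^ (n - i) := by
          calc y ^ (n + 1) = y * y ^ n := by ring
          _ = (∑ i ∈ Finset.range (n + 1), (q.coeff i : F) * z ^ i) * y ^ n := by rw [← hq']
          _ = ∑ i ∈ Finset.range (n + 1), (q.coeff i : F) * (z ^ i * y ^ n) := by
              rw [Finset.sum_mul]; exact Finset.sum_congr rfl fun i _ => by ring
          _ = _ := Finset.sum_congr rfl fun i hi => by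
              rw [hyz i (Nat.lt_succ_iff.mp (Finset.mem_range.mp hi))]
        simp only [Polynomial.eval_sub, Polynomial.eval_pow, Polynomial.eval_X,
          Polynomial.eval_finset_sum, Polynomial.eval_mul, Polynomial.eval_C, sub_eq_zero]
        exact key
    obtain ⟨m, hm, hzm⟩ := exists_max_ideal_of_mem_nonunits hznu
    let L := LocalSubring.ofPrime S m
    have hzL : z ∈ L.toSubring := LocalSubring.le_ofPrime S m hzS
    have hzLnu : ¬ IsUnit (⟨z, hzL⟩ : L.toSubring) := by
      have := (IsLocalization.AtPrime.isUnit_to_map_iff (R := S) L.toSubring m ⟨z, hzS⟩).not.mpr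
        (fun h => h hzm)
      exact this
    obtain ⟨B, hB⟩ := L.exists_le_valuationSubring
    have hzBnu : ¬ IsUnit (⟨z, hB.1 hzL⟩ : B.toSubring) := by
      intro hu
      exact hzLnu (hB.2.1 _ hu)
    have hRB : ∀ x ∈ R, x ∈ B.toSubring := fun x hx =>
      hB.1 (LocalSubring.le_ofPrime S m (algebraMap_mem (Algebra.adjoin R {z}) ⟨x, hx⟩))
    have hyB : y ∉ B.toSubring := by
      intro hyB
      apply hzBnu
      refine isUnit_iff_exists_inv.mpr ⟨⟨y, hyB⟩, ?_⟩
      ext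
      simp [hz, inv_mul_cancel₀ hy0]
    have := H B.ValueGroup inferInstance B.valuation
      (fun x hx => (B.valuation_le_one_iff x).mpr (hRB x hx))
    exact hyB ((B.valuation_le_one_iff y).mp this)
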